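/- If 0 < t < 1 and x ∈ (0,1) satisfies t·artanh(x) = x, then x > √(1 − t). -/
import Mathlib

/-- The inverse hyperbolic tangent, artanh(x) = (1/2)·log((1+x)/(1−x)). -/
noncomputable def artanh (x : ℝ) : ℝ := (1 / 2) * Real.log ((1 + x) / (1 - x))

lemma log_lt_half_sub_inv {y : ℝ} (hy : 1 < y) : Real.log y < (y - y⁻¹) / 2 := by
  have key : StrictMonoOn (fun y : ℝ => (y - y⁻¹) / 2 - Real.log y) (Set.Ici 1) := by
    apply strictMonoOn_of_deriv_pos (convex_Ici 1)
    · apply ContinuousOn.sub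
      · exact (continuousOn_id.sub (continuousOn_id.inv₀ (fun z hz => by
          have : (1:ℝ) ≤ z := hz; positivity))).div_const 2
      · exact Real.continuousOn_log.mono (fun z hz => by
          have : (1:ℝ) ≤ z := hz; simp; linarith)
    · intro z hz
      rw [interior_Ici] at hz
      have hz0 : (0 : ℝ) < z := lt_trans one_pos hz
      have h1 : HasDerivAt (fun y : ℝ => (y - y⁻¹) / 2 - Real.log y)
          ((1 - (-(z ^ 2)⁻¹)) / 2 - z⁻¹) z := by
        exact (((hasDerivAt_id z).sub (hasDerivAt_inv hz0.ne')).div_const 2).sub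
          (Real.hasDerivAt_log hz0.ne')
      rw [h1.deriv]
      have h2 : (1 - (-(z ^ 2)⁻¹)) / 2 - z⁻¹ = (z - 1) ^ 2 / (2 * z ^ 2) := by
        field_simp; ring
      rw [h2]
      have h3 : 0 < z - 1 := sub_pos.mpr hz
      positivity
  have h := key (Set.self_mem_Ici) (le_of_lt hy) hy
  simp only [inv_one, Real.log_one] at h
  linarith

theorem solution_lower_bound (t x : ℝ) (ht : 0 < t) (ht1 : t < 1)
    (hx : x ∈ Set.Ioo (0 : ℝ) 1) (heq : t * artanh x = x) :
    Real.sqrt (1 - t) < x := by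
  obtain ⟨hx0, hx1⟩ := hx
  set y : ℝ := (1 + x) / (1 - x) with hy
  have hx1' : (0 : ℝ) < 1 - x := by linarith
  have hygt : 1 < y := by
    rw [hy, lt_div_iff₀ hx1']; linarith
  have hy0 : (0 : ℝ) < y := lt_trans one_pos hygt
  have hinv : y⁻¹ = (1 - x) / (1 + x) := by
    rw [hy, inv_div]
  have hden : (0 : ℝ) < 1 - x ^ 2 := by nlinarith
  have hsub : y - y⁻¹ = 4 * x / (1 - x ^ 2) := by
    rw [hy, hinv]
    field_simp
    ring
  have hart : artanh x < x / (1 - x ^ 2) := by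
    have := log_lt_half_sub_inv hygt
    rw [hsub] at this
    unfold artanh
    rw [← hy]
    have hA : 4 * x / (1 - x ^ 2) = 4 * (x / (1 - x ^ 2)) := by ring
    rw [hA] at this
    linarith
  have hart0 : 0 < artanh x := by nlinarith
  -- from heq : x = t * artanh x < t * x / (1 - x^2)
  have h1 : x < t * (x / (1 - x ^ 2)) := by
    calc x = t * artanh x := heq.symm
    _ < t * (x / (1 - x ^ 2)) := by exact mul_lt_mul_of_pos_left hart ht
  have h1' : x * (1 - x ^ 2) < t * x := by
    have h3 := mul_lt_mul_of_pos_right h1 hden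
    rwa [mul_assoc, div_mul_cancel₀ _ hden.ne'] at h3
  have h2 : 1 - t < x ^ 2 := by nlinarith
  rw [Real.sqrt_lt' hx0]
  linarith
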